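/- Inverted Fano bound (entropy certifies a Bayes-risk lower bound): let π be a probability vector on N ≥ 2 items with r = 1 − max_j π_j, and let r₀ ∈ [0, (N−1)/N]. If H(π) ≥ H_b(r₀) + r₀·log(N−1), then r ≥ r₀. -/

import Mathlib

open Real Finset

/-- Pointwise Gibbs inequality: `a log b - a log a ≤ b - a`. -/
lemma gibbs_pointwise {a b : ℝ} (ha : 0 ≤ a) (hb : 0 ≤ b) (h : b = 0 → a = 0) :
    a * Real.log b - a * Real.log a ≤ b - a := by
  rcases eq_or_lt_of_le ha with h0 | h0
  · simp [← h0]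
    linarith
  · have hb0 : 0 < b := by
      rcases eq_or_lt_of_le hb with e | e
      · exact absurd (h e.symm) (by linarith)
      · exact e
    have hlog := Real.log_le_sub_one_of_pos (div_pos hb0 h0)
    rw [Real.log_div hb0.ne' h0.ne'] at hlog
    have := mul_le_mul_of_nonneg_left hlog h0.le
    have hba : a * (b / a) = b := by field_simp
    nlinarith

lemma qE_eq (N : ℕ) (x : ℝ) : Real.qaryEntropy N x
    = -x * Real.log x - (1 - x) * Real.log (1 - x) + x * Real.log ((N : ℝ) - 1) := by
  simp only [Real.qaryEntropy, Real.binEntropy, Real.log_inv]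
  push_cast
  ring

/-- **Inverted Fano bound (entropy certifies a Bayes-risk lower bound).** Let `p` be a
probability vector on `N ≥ 2` items with `r = 1 - max_j p_j`, and let
`r₀ ∈ [0, (N-1)/N]`. If the Shannon entropy `H(p) = -∑ j, p j * log (p j)` satisfies
`H(p) ≥ H_b(r₀) + r₀ * log (N - 1)` (with `H_b` the binary entropy function), then
`r ≥ r₀`. -/
theorem fano_bound_inverted (N : ℕ) (hN : 2 ≤ N) (p : Fin N → ℝ)
    (hnonneg : ∀ j, 0 ≤ p j) (hsum : ∑ j, p j = 1)
    (r : ℝ)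
    (hr : r = 1 - Finset.univ.sup' (Finset.univ_nonempty_iff.mpr ⟨⟨0, by omega⟩⟩) p)
    (r₀ : ℝ) (hr₀ : r₀ ∈ Set.Icc (0 : ℝ) (((N : ℝ) - 1) / N))
    (hH : (-∑ j, p j * Real.log (p j)) ≥
      (-r₀ * Real.log r₀ - (1 - r₀) * Real.log (1 - r₀)) + r₀ * Real.log ((N : ℝ) - 1)) :
    r ≥ r₀ := by
  have hNpos : (0 : ℝ) < N := by positivity
  have hN1 : (1 : ℝ) ≤ (N : ℝ) - 1 := by
    have : (2 : ℝ) ≤ N := by exact_mod_cast hN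
    linarith
  have hN1pos : (0 : ℝ) < (N : ℝ) - 1 := by linarith
  have heq : ((N : ℝ) - 1) / N = 1 - 1 / N := by field_simp
  set ne : (Finset.univ : Finset (Fin N)).Nonempty :=
    Finset.univ_nonempty_iff.mpr ⟨⟨0, by omega⟩⟩ with hne
  set M : ℝ := Finset.univ.sup' ne p with hM
  obtain ⟨j0, -, hj0⟩ := Finset.exists_mem_eq_sup' ne p
  rw [← hM] at hj0
  -- basic bounds on M and r
  have hM1 : M ≤ 1 := by
    rw [hj0, ← hsum]
    exact Finset.single_le_sum (fun j _ => hnonneg j) (Finset.mem_univ j0)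
  have hMN : 1 ≤ (N : ℝ) * M := by
    have : (∑ j, p j) ≤ ∑ _j : Fin N, M :=
      Finset.sum_le_sum fun j _ => Finset.le_sup' p (Finset.mem_univ j)
    simpa [hsum, Finset.card_univ, mul_comm] using this
  have hMpos : 0 < M := by nlinarith
  have hr0 : 0 ≤ r := by rw [hr]; linarith
  have hrlt : r ≤ 1 - 1 / N := by
    rw [hr]
    have : 1 / (N : ℝ) ≤ M := by rw [div_le_iff₀ hNpos]; linarith
    linarith
  have h1r : 1 - r = p j0 := by rw [hr, hj0]; ring
  have h1rpos : 0 < 1 - r := by rw [hr]; linarith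
  -- sum over the rest equals r
  have hsplit : ∑ j ∈ Finset.univ.erase j0, p j = r := by
    have := Finset.add_sum_erase Finset.univ p (Finset.mem_univ j0)
    rw [hsum] at this
    rw [hr, hj0]
    linarith
  have hprest : ∀ j ∈ Finset.univ.erase j0, p j ≤ r := by
    intro j hj
    rw [← hsplit]
    exact Finset.single_le_sum (fun i _ => hnonneg i) hj
  -- Gibbs with q j = if j = j0 then 1 - r else r / (N-1)
  set q : Fin N → ℝ := fun j => if j = j0 then 1 - r else r / ((N : ℝ) - 1) with hq
  have hqsum : ∑ j, q j = 1 := by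
    rw [← Finset.add_sum_erase Finset.univ q (Finset.mem_univ j0)]
    have h1 : q j0 = 1 - r := by simp [hq]
    have h2 : ∑ j ∈ Finset.univ.erase j0, q j = ((N : ℝ) - 1) * (r / ((N : ℝ) - 1)) := by
      rw [Finset.sum_congr rfl (fun j hj => by
        simp only [hq]; rw [if_neg (Finset.ne_of_mem_erase hj)])]
      rw [Finset.sum_const, Finset.card_erase_of_mem (Finset.mem_univ j0), Finset.card_univ]
      simp only [Fintype.card_fin, nsmul_eq_mul]
      push_cast [Nat.cast_sub (by omega : 1 ≤ N)]
      ring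
    rw [h1, h2]
    field_simp
    ring
  have hgibbs : ∑ j, (p j * Real.log (q j) - p j * Real.log (p j)) ≤ 0 := by
    calc ∑ j, (p j * Real.log (q j) - p j * Real.log (p j))
        ≤ ∑ j, (q j - p j) := by
          apply Finset.sum_le_sum
          intro j _
          apply gibbs_pointwise (hnonneg j)
          · by_cases hj : j = j0
            · simp only [hq, hj, if_pos rfl]; linarith
            · simp only [hq, if_neg hj]; positivity
          · by_cases hj : j = j0
            · simp only [hq, hj, if_pos rfl]
              intro h0; exfalso; linarith
            · simp only [hq, if_neg hj]
              intro h0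
              have hr00 : r = 0 := by
                field_simp at h0
                simpa using h0
              have := hprest j (Finset.mem_erase.mpr ⟨hj, Finset.mem_univ j⟩)
              have := hnonneg j
              linarith
        _ = 0 := by rw [Finset.sum_sub_distrib, hqsum, hsum]; ring
  -- compute ∑ p j * log (q j)
  have hqlog : ∑ j, p j * Real.log (q j)
      = (1 - r) * Real.log (1 - r) + r * Real.log r - r * Real.log ((N : ℝ) - 1) := by
    rw [← Finset.add_sum_erase Finset.univ (fun j => p j * Real.log (q j))
      (Finset.mem_univ j0)]
    have h1 : p j0 * Real.log (q j0) = (1 - r) * Real.log (1 - r) := by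
      simp only [hq, if_pos rfl]
      rw [h1r]
    have h2 : ∑ j ∈ Finset.univ.erase j0, p j * Real.log (q j)
        = r * Real.log (r / ((N : ℝ) - 1)) := by
      rw [Finset.sum_congr rfl (fun j hj => by
        simp only [hq]; rw [if_neg (Finset.ne_of_mem_erase hj)]), ← Finset.sum_mul, hsplit]
    rw [h1, h2]
    rcases eq_or_lt_of_le hr0 with h0 | h0
    · rw [← h0]; ring_nf
    · rw [Real.log_div h0.ne' hN1pos.ne']
      ring
  -- Fano's inequality
  have hFano : (-∑ j, p j * Real.log (p j)) ≤ Real.qaryEntropy N r := by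
    rw [qE_eq]
    have := hgibbs
    rw [Finset.sum_sub_distrib, hqlog] at this
    linarith
  -- monotonicity finish
  have hr₀' : r₀ ∈ Set.Icc (0:ℝ) (1 - 1/N) := by
    rw [← heq]; exact hr₀
  have hrmem : r ∈ Set.Icc (0:ℝ) (1 - 1/N) := ⟨hr0, hrlt⟩
  by_contra hc
  push_neg at hc
  have hmono := Real.qaryEntropy_strictMonoOn hN hrmem hr₀' hc
  rw [qE_eq] at hFano
  rw [qE_eq, qE_eq] at hmono
  linarith
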